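/- Let a ∈ ℝⁿ, ‖a‖₂ = 1, b = (1, a) ∈ ℝ^{n+1}. If X is a positive semidefinite (n+1)×(n+1) matrix with X₁₁ = 1, first column equal to b, Tr(X) = 2, and X_{ii} = a_{i-1}² for all i ≥ 2, then X = b bᵀ. -/
import Mathlib


open Matrix

/-- A PSD matrix with `X₁₁ = 1`, first column `b = (1, a)` with `‖a‖₂ = 1`, trace 2,
and diagonal `X_{ii} = a_{i-1}²` must be the rank-one matrix `b bᵀ`. -/
theorem stmt1 {n : ℕ} (a : Fin n → ℝ) (ha : ∑ i, a i ^ 2 = 1)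
    (X : Matrix (Fin (n + 1)) (Fin (n + 1)) ℝ) (hX : X.PosSemidef)
    (hcol : ∀ i : Fin (n + 1), X i 0 = (Fin.cons 1 a : Fin (n + 1) → ℝ) i)
    (htr : X.trace = 2)
    (hdiag : ∀ i : Fin n, X i.succ i.succ = a i ^ 2) :
    X = Matrix.vecMulVec (Fin.cons 1 a : Fin (n + 1) → ℝ)
          (Fin.cons 1 a : Fin (n + 1) → ℝ) := by
  set b : Fin (n + 1) → ℝ := Fin.cons 1 a with hb
  have hsym : ∀ i j, X i j = X j i := fun i j => by
    conv_lhs => rw [← hX.1]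
    simp [conjTranspose_apply]
  have hdd : ∀ i : Fin (n + 1), X i i = b i ^ 2 := by
    intro i
    refine Fin.cases ?_ ?_ i
    · have := hcol 0; simpa [hb] using this
    · intro j; simpa [hb] using hdiag j
  -- for each i, the vector w = e_i - b i • e_0 satisfies wᵀ X w = 0
  have key : ∀ i : Fin (n + 1), ∀ j : Fin (n + 1), X j i = b i * b j := by
    intro i j
    set w : Fin (n + 1) → ℝ := fun k => (if k = i then 1 else 0) - b i * (if k = 0 then 1 else 0) with hw
    have hmv : ∀ j, (X *ᵥ w) j = X j i - b i * X j 0 := by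
      intro j
      simp only [mulVec, dotProduct, hw, mul_sub, mul_ite, mul_one, mul_zero]
      simp [Finset.sum_sub_distrib, Finset.sum_ite_eq', mul_comm]
    have hq : star w ⬝ᵥ X *ᵥ w = 0 := by
      have : star w ⬝ᵥ X *ᵥ w = ∑ k, w k * (X k i - b i * X k 0) := by
        simp only [dotProduct, star_trivial]
        exact Finset.sum_congr rfl fun k _ => by rw [hmv k]
      rw [this]
      have hsum : ∑ k, w k * (X k i - b i * X k 0)
          = (X i i - b i * X i 0) - b i * (X 0 i - b i * X 0 0) := by
        simp only [hw, sub_mul, ite_mul, one_mul, zero_mul, mul_comm]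
        simp [mul_sub, sub_mul, mul_ite, ite_mul, Finset.sum_sub_distrib,
          Finset.sum_ite_eq', mul_comm]
        ring
      rw [hsum, hdd i, hcol i, hsym 0 i, hcol i]
      have h00 : X 0 0 = 1 := by have := hcol 0; simpa [hb] using this
      rw [h00]
      ring
    have hz := (hX.dotProduct_mulVec_zero_iff w).mp hq
    have := congrFun hz j
    rw [hmv j, hcol j, Pi.zero_apply] at this
    linarith [this]
  ext i j
  rw [vecMulVec_apply, key j i, mul_comm]
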